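/- If W : [0,1] → ℝ^{M×M} is a differentiable solution of the ETKBF equation dW/ds = − (1/(2(M−1))) · W Wᵀ S W with W(0) = I, where S := (Y^b)ᵀ R⁻¹ Y^b, then for every s ∈ [0,1] one has W(s) W(s)ᵀ / (M−1) = (s·S + (M−1)·I)⁻¹. In particular W(1) W(1)ᵀ / (M−1) = (S + (M−1) I)⁻¹, so the ETKBF analysis covariance coincides with the LETKF analysis covariance in ensemble space. -/

import Mathlib

open Matrix

attribute [local instance] Matrix.normedAddCommGroup Matrix.normedSpace

namespace Stmt16Aux

variable {M : ℕ}

/-- Transpose as a continuous linear map. -/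
noncomputable def tCLM (M : ℕ) :
    Matrix (Fin M) (Fin M) ℝ →L[ℝ] Matrix (Fin M) (Fin M) ℝ :=
  LinearMap.toContinuousLinearMap
    ((Matrix.transposeLinearEquiv (Fin M) (Fin M) ℝ ℝ) : _ →ₗ[ℝ] _)

@[simp] lemma tCLM_apply (A : Matrix (Fin M) (Fin M) ℝ) : tCLM M A = Aᵀ := rfl

/-- Matrix multiplication as a continuous bilinear map. -/
noncomputable def mulCLM (M : ℕ) :
    Matrix (Fin M) (Fin M) ℝ →L[ℝ] Matrix (Fin M) (Fin M) ℝ →L[ℝ] Matrix (Fin M) (Fin M) ℝ :=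
  LinearMap.toContinuousLinearMap
    { toFun := fun X => LinearMap.toContinuousLinearMap (LinearMap.mulLeft ℝ X)
      map_add' := fun X Y => by ext Z; simp [add_mul]
      map_smul' := fun r X => by ext Z; simp [smul_mul_assoc] }

@[simp] lemma mulCLM_apply (A B : Matrix (Fin M) (Fin M) ℝ) : mulCLM M A B = A * B := rfl

lemma hasDerivWithinAt_transpose {f : ℝ → Matrix (Fin M) (Fin M) ℝ}
    {f' : Matrix (Fin M) (Fin M) ℝ} {s : Set ℝ} {x : ℝ}
    (hf : HasDerivWithinAt f f' s x) :
    HasDerivWithinAt (fun t => (f t)ᵀ) f'ᵀ s x := by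
  exact (tCLM M).hasFDerivAt.comp_hasDerivWithinAt x hf

lemma hasDerivWithinAt_matMul {f g : ℝ → Matrix (Fin M) (Fin M) ℝ}
    {f' g' : Matrix (Fin M) (Fin M) ℝ} {s : Set ℝ} {x : ℝ}
    (hf : HasDerivWithinAt f f' s x) (hg : HasDerivWithinAt g g' s x) :
    HasDerivWithinAt (fun t => f t * g t) (f' * g x + f x * g') s x := by
  letI : NormedRing (Matrix (Fin M) (Fin M) ℝ) := Matrix.linftyOpNormedRing
  letI : NormedAlgebra ℝ (Matrix (Fin M) (Fin M) ℝ) := Matrix.linftyOpNormedAlgebra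
  exact hf.mul hg

lemma norm_matMul_le (A B : Matrix (Fin M) (Fin M) ℝ) :
    ‖A * B‖ ≤ (M : ℝ) * ‖A‖ * ‖B‖ := by
  rw [Matrix.norm_le_iff (by positivity)]
  intro i j
  calc ‖(A * B) i j‖ = ‖∑ k, A i k * B k j‖ := by rw [Matrix.mul_apply]
    _ ≤ ∑ k, ‖A i k * B k j‖ := norm_sum_le _ _
    _ ≤ ∑ _k : Fin M, ‖A‖ * ‖B‖ := by
        refine Finset.sum_le_sum fun k _ => ?_
        rw [norm_mul]
        exact mul_le_mul (Matrix.norm_entry_le_entrywise_sup_norm A)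
          (Matrix.norm_entry_le_entrywise_sup_norm B) (norm_nonneg _) (norm_nonneg _)
    _ = (M : ℝ) * ‖A‖ * ‖B‖ := by simp [Finset.sum_const, mul_assoc]

end Stmt16Aux

open Stmt16Aux Set

/-- If `W` solves the ETKBF equation `dW/ds = −(1/(2(M−1))) W Wᵀ S W` with `W(0) = I`,
where `S := (Y^b)ᵀ R⁻¹ Y^b`, then `W(s) W(s)ᵀ/(M−1) = (s·S + (M−1)·I)⁻¹` for all
`s ∈ [0,1]`; in particular `W(1) W(1)ᵀ/(M−1) = (S + (M−1)·I)⁻¹`, the LETKF analysis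
covariance in ensemble space. -/
theorem stmt_16 {L M : ℕ} (hM : 2 ≤ M)
    (Yb : Matrix (Fin L) (Fin M) ℝ) (R : Matrix (Fin L) (Fin L) ℝ) (hR : R.PosDef)
    (S : Matrix (Fin M) (Fin M) ℝ) (hS : S = Ybᵀ * R⁻¹ * Yb)
    (W : ℝ → Matrix (Fin M) (Fin M) ℝ)
    (hW : ∀ s ∈ Set.Icc (0:ℝ) 1,
      HasDerivWithinAt W
        (-(1 / (2 * ((M : ℝ) - 1))) • (W s * (W s)ᵀ * S * W s))
        (Set.Icc 0 1) s)
    (hW0 : W 0 = 1) :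
    (∀ s ∈ Set.Icc (0:ℝ) 1,
      ((M : ℝ) - 1)⁻¹ • (W s * (W s)ᵀ) = (s • S + ((M : ℝ) - 1) • 1)⁻¹) ∧
    ((M : ℝ) - 1)⁻¹ • (W 1 * (W 1)ᵀ) = (S + ((M : ℝ) - 1) • 1)⁻¹ := by
  set c : ℝ := (M : ℝ) - 1 with hc_def
  have hc1 : (1 : ℝ) ≤ c := by
    have : (2 : ℝ) ≤ (M : ℝ) := by exact_mod_cast hM
    linarith
  have hc0 : c ≠ 0 := by linarith
  -- S is symmetric
  have hSsym : Sᵀ = S := by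
    rw [hS]
    rw [Matrix.transpose_mul, Matrix.transpose_mul, Matrix.transpose_transpose,
      Matrix.transpose_nonsing_inv]
    have hRsym : Rᵀ = R := by
      rw [← Matrix.conjTranspose_eq_transpose_of_trivial]
      exact hR.isHermitian.eq
    rw [hRsym, Matrix.mul_assoc]
  set P : ℝ → Matrix (Fin M) (Fin M) ℝ := fun t => c⁻¹ • (W t * (W t)ᵀ) with hP_def
  set A : ℝ → Matrix (Fin M) (Fin M) ℝ := fun t => t • S + c • 1 with hA_def
  set E : ℝ → Matrix (Fin M) (Fin M) ℝ := fun t => A t * P t - 1 with hE_def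
  -- derivative of E
  have hE : ∀ t ∈ Icc (0:ℝ) 1,
      HasDerivWithinAt E (-(E t * (S * P t))) (Icc 0 1) t := by
    intro t ht
    set D : Matrix (Fin M) (Fin M) ℝ :=
      -(1 / (2 * c)) • (W t * (W t)ᵀ * S * W t) with hD_def
    have hWt : HasDerivWithinAt W D (Icc 0 1) t := hW t ht
    have hWT : HasDerivWithinAt (fun u => (W u)ᵀ) Dᵀ (Icc 0 1) t :=
      hasDerivWithinAt_transpose hWt
    have hQ : HasDerivWithinAt (fun u => W u * (W u)ᵀ)
        (D * (W t)ᵀ + W t * Dᵀ) (Icc 0 1) t := hasDerivWithinAt_matMul hWt hWT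
    have hP' : HasDerivWithinAt P (c⁻¹ • (D * (W t)ᵀ + W t * Dᵀ)) (Icc 0 1) t :=
      hQ.const_smul c⁻¹
    have hA' : HasDerivWithinAt A S (Icc 0 1) t := by
      have h := ((hasDerivWithinAt_id t (Icc (0:ℝ) 1)).smul_const S).add_const (c • (1 : Matrix (Fin M) (Fin M) ℝ))
      rw [one_smul] at h
      exact h
    have hAP : HasDerivWithinAt (fun u => A u * P u)
        (S * P t + A t * (c⁻¹ • (D * (W t)ᵀ + W t * Dᵀ))) (Icc 0 1) t :=
      hasDerivWithinAt_matMul hA' hP'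
    have hkey : c⁻¹ • (D * (W t)ᵀ + W t * Dᵀ) = -(P t * (S * P t)) := by
      have hDT : Dᵀ = -(1 / (2 * c)) • ((W t)ᵀ * S * (W t * (W t)ᵀ)) := by
        rw [hD_def, Matrix.transpose_smul]
        congr 1
        rw [Matrix.transpose_mul, Matrix.transpose_mul, Matrix.transpose_mul,
          Matrix.transpose_transpose, hSsym]
        noncomm_ring
      rw [hDT, hD_def, hP_def]
      simp only [Matrix.smul_mul, Matrix.mul_smul, smul_smul, smul_add, ← neg_smul]
      have hm1 : W t * (W t)ᵀ * S * W t * (W t)ᵀ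
          = W t * ((W t)ᵀ * S * (W t * (W t)ᵀ)) := by noncomm_ring
      have hm2 : W t * (W t)ᵀ * (S * (W t * (W t)ᵀ))
          = W t * ((W t)ᵀ * S * (W t * (W t)ᵀ)) := by noncomm_ring
      rw [hm1, hm2, ← add_smul]
      congr 1
      field_simp
      ring
    have hthis : HasDerivWithinAt (fun u => A u * P u)
        (S * P t + A t * -(P t * (S * P t))) (Icc 0 1) t := hkey ▸ hAP
    have heq : S * P t + A t * -(P t * (S * P t)) = -(E t * (S * P t)) := by
      show S * P t + A t * -(P t * (S * P t)) = -((A t * P t - 1) * (S * P t))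
      noncomm_ring
    have : HasDerivWithinAt (fun u => A u * P u) (-(E t * (S * P t))) (Icc 0 1) t :=
      heq ▸ hthis
    exact this.sub_const 1
  -- continuity
  have hEcont : ContinuousOn E (Icc 0 1) := fun t ht => (hE t ht).continuousWithinAt
  have hWcont : ContinuousOn W (Icc 0 1) := fun t ht => (hW t ht).continuousWithinAt
  have hCcont : ContinuousOn (fun t => S * P t) (Icc 0 1) := by
    have ha : ContinuousOn (fun t => mulCLM M (W t)) (Icc 0 1) :=
      (mulCLM M).continuous.comp_continuousOn hWcont
    have hb : ContinuousOn (fun t => (W t)ᵀ) (Icc 0 1) :=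
      (tCLM M).continuous.comp_continuousOn hWcont
    have h1 : ContinuousOn (fun t => W t * (W t)ᵀ) (Icc 0 1) := by
      exact ha.clm_apply hb
    have h2 : ContinuousOn P (Icc 0 1) := h1.const_smul c⁻¹
    have := (mulCLM M S).continuous.comp_continuousOn h2
    simpa [Function.comp_def] using this
  -- bound on the coefficient
  obtain ⟨K₀, hK₀⟩ := (isCompact_Icc : IsCompact (Icc (0:ℝ) 1)).exists_bound_of_continuousOn hCcont
  have hK₀0 : 0 ≤ K₀ := le_trans (norm_nonneg _) (hK₀ 0 ⟨le_refl _, zero_le_one⟩)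
  set K : ℝ := (M : ℝ) * K₀ with hK_def
  -- E 0 = 0
  have hE0 : E 0 = 0 := by
    rw [hE_def]
    simp only [hA_def, hP_def, hW0, zero_smul, zero_add, Matrix.transpose_one, mul_one,
      Matrix.smul_mul, Matrix.mul_smul, Matrix.mul_one, smul_smul]
    rw [inv_mul_cancel₀ hc0, one_smul, sub_self]
  -- Gronwall
  have hEzero : ∀ t ∈ Icc (0:ℝ) 1, E t = 0 := by
    have hbound := norm_le_gronwallBound_of_norm_deriv_right_le (f := E)
      (f' := fun t => -(E t * (S * P t))) (δ := 0) (K := K) (ε := 0) (a := 0) (b := 1)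
      hEcont
      (fun t ht => (hE t (Ico_subset_Icc_self ht)).mono_of_mem_nhdsWithin
        (Icc_mem_nhdsGE_of_mem ht))
      (by rw [hE0]; simp)
      (fun t ht => by
        rw [norm_neg, add_zero]
        calc ‖E t * (S * P t)‖ ≤ (M : ℝ) * ‖E t‖ * ‖S * P t‖ := norm_matMul_le _ _
          _ ≤ (M : ℝ) * ‖E t‖ * K₀ := by
              refine mul_le_mul_of_nonneg_left (hK₀ t (Ico_subset_Icc_self ht)) ?_
              positivity
          _ = K * ‖E t‖ := by rw [hK_def]; ring)
    intro t ht
    have := hbound t ht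
    rw [gronwallBound_ε0_δ0] at this
    exact norm_le_zero_iff.mp this
  have main : ∀ s ∈ Icc (0:ℝ) 1,
      c⁻¹ • (W s * (W s)ᵀ) = (s • S + c • 1)⁻¹ := by
    intro s hs
    have h1 : A s * P s = 1 := by
      have := hEzero s hs
      rw [hE_def] at this
      exact sub_eq_zero.mp this
    exact (Matrix.inv_eq_right_inv h1).symm
  refine ⟨main, ?_⟩
  have := main 1 ⟨zero_le_one, le_refl _⟩
  rwa [one_smul] at this
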